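/- For every i ∈ I, the endomorphisms T_i and T_i' of K_t(A) are mutually inverse: T_i ∘ T_i' = id_{K_t(A)} and T_i' ∘ T_i = id_{K_t(A)}. In particular T_i is an F-algebra automorphism of K_t(A). -/

import Mathlib

noncomputable section

/-- The base field `F = ℂ(s)`, rational functions over `ℂ` in one variable `s`. -/
abbrev F : Type := RatFunc ℂ

/-- `t^{1/2} := s`. -/
def tHalf : F := RatFunc.X

/-- `t := s^2`. -/
def tq : F := RatFunc.X ^ 2

/-- `A = (a i j)` is the Cartan matrix of a finite-dimensional simply-laced simple Lie
algebra of type ADE: a symmetric positive-definite integer matrix with diagonal entries `2`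
and off-diagonal entries in `{0, -1}`. -/
def IsCartanADE {I : Type} [Fintype I] (a : I → I → ℤ) : Prop :=
  (∀ i, a i i = 2) ∧ (∀ i j, a i j = a j i) ∧
    (∀ i j, i ≠ j → a i j = 0 ∨ a i j = -1) ∧
    Matrix.PosDef (Matrix.of fun i j : I => (a i j : ℝ))

variable {I : Type} [Fintype I] [DecidableEq I]

/-- The generator `y(i,m)` of the free algebra. -/
def X (i : I) (m : ℤ) : FreeAlgebra F (I × ℤ) := FreeAlgebra.ι F (i, m)

/-- The defining relations (a), (b), (c) of the quantum Grothendieck ring `K_t(A)`: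
(a) quantum Serre relations in each copy, (b) `t`-boson relations between adjacent
copies, (c) `t`-commutation relations between non-adjacent copies. -/
inductive KtRel (a : I → I → ℤ) :
    FreeAlgebra F (I × ℤ) → FreeAlgebra F (I × ℤ) → Prop
  | comm0 {i j : I} {m : ℤ} (h : a i j = 0) :
      KtRel a (X i m * X j m) (X j m * X i m)
  | serre {i j : I} {m : ℤ} (h : a i j = -1) :
      KtRel a (X i m ^ 2 * X j m + X j m * X i m ^ 2)
        ((tq + tq⁻¹) • (X i m * X j m * X i m))
  | boson (i j : I) (m : ℤ) :
      KtRel a (X i m * X j (m + 1))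
        ((tq ^ (a i j)) • (X j (m + 1) * X i m)
          + (if i = j then ((1 : F) - tq ^ 2) • (1 : FreeAlgebra F (I × ℤ)) else 0))
  | tcomm {i j : I} {m p : ℤ} (h : p > m + 1) :
      KtRel a (X i m * X j p)
        ((tq ^ ((((-1 : ℤˣ) ^ (p - m + 1) : ℤˣ) : ℤ) * a i j)) • (X j p * X i m))

/-- The quantum Grothendieck ring `K_t(A)`. -/
abbrev Kt (a : I → I → ℤ) := RingQuot (KtRel a)

/-- The generators `y(i,m)` of `K_t(A)`. -/
def y (a : I → I → ℤ) (i : I) (m : ℤ) : Kt a :=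
  RingQuot.mkAlgHom F (KtRel a) (X i m)

/-- `z(i; j, m) := (t^{1/2} y(j,m) y(i,m) − t^{−1/2} y(i,m) y(j,m)) / (t − t^{−1})`. -/
def z (a : I → I → ℤ) (i j : I) (m : ℤ) : Kt a :=
  (tq - tq⁻¹)⁻¹ • (tHalf • (y a j m * y a i m) - tHalf⁻¹ • (y a i m * y a j m))

/-- `T` satisfies the defining formulas of the braid-group generator `T_i` on `K_t(A)`:
`T(y(j,m)) = y(j, m + δ_{ij})` if `a i j ≠ -1`, and
`T(y(j,m)) = (t^{1/2} y(j,m) y(i,m) − t^{−1/2} y(i,m) y(j,m)) / (t − t^{−1})`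
if `a i j = -1`. -/
def TiFormula (a : I → I → ℤ) (i : I) (T : Kt a → Kt a) : Prop :=
  ∀ (j : I) (m : ℤ),
    T (y a j m) =
      if a i j = -1 then z a i j m else y a j (m + if i = j then 1 else 0)

/-- `T` satisfies the defining formulas of the inverse braid-group generator `T_i'`:
`T(y(j,m)) = y(j, m − δ_{ij})` if `a i j ≠ -1`, and
`T(y(j,m)) = (t^{1/2} y(i,m) y(j,m) − t^{−1/2} y(j,m) y(i,m)) / (t − t^{−1})`
if `a i j = -1`. -/
def TiInvFormula (a : I → I → ℤ) (i : I) (T : Kt a → Kt a) : Prop :=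
  ∀ (j : I) (m : ℤ),
    T (y a j m) =
      if a i j = -1 then
        (tq - tq⁻¹)⁻¹ • (tHalf • (y a i m * y a j m) - tHalf⁻¹ • (y a j m * y a i m))
      else y a j (m - if i = j then 1 else 0)


-- Auxiliary lemmas ------------------------------------------------------

lemma tHalf_ne_zero : tHalf ≠ 0 := RatFunc.X_ne_zero

lemma tq_eq : tq = tHalf ^ 2 := rfl

lemma tfour_ne_zero : tHalf ^ 4 - 1 ≠ 0 := by
  rw [sub_ne_zero]
  intro h4
  have h5 : (Polynomial.X : Polynomial ℂ) ^ 4 = 1 := by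
    apply RatFunc.algebraMap_injective ℂ
    simpa [map_pow, RatFunc.algebraMap_X, tHalf] using h4
  have := congrArg Polynomial.natDegree h5
  simp [Polynomial.natDegree_X_pow] at this

section Key

variable {K R : Type} [Field K] [Ring R] [Algebra K R] (tHalf : K)
  (hs : tHalf ≠ 0) (h4 : tHalf ^ 4 - 1 ≠ 0)
include hs h4

lemma key1 (A B Y : R)
    (h1 : A * Y = ((tHalf ^ 2) ^ 2) • (Y * A) + (1 - (tHalf ^ 2) ^ 2) • (1 : R))
    (h2 : B * Y = (tHalf ^ 2)⁻¹ • (Y * B)) :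
    (tHalf ^ 2 - (tHalf ^ 2)⁻¹)⁻¹ •
        (tHalf • (Y * ((tHalf ^ 2 - (tHalf ^ 2)⁻¹)⁻¹ •
            (tHalf • (B * A) - tHalf⁻¹ • (A * B)))) -
          tHalf⁻¹ • (((tHalf ^ 2 - (tHalf ^ 2)⁻¹)⁻¹ •
            (tHalf • (B * A) - tHalf⁻¹ • (A * B))) * Y)) = B := by
  have hqne : tHalf ^ 2 - (tHalf ^ 2)⁻¹ ≠ 0 := by
    have hv : tHalf ^ 2 - (tHalf ^ 2)⁻¹ = (tHalf ^ 4 - 1) / tHalf ^ 2 := by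
      field_simp
    rw [hv]
    exact div_ne_zero h4 (pow_ne_zero 2 hs)
  have e1 : B * A * Y = (tHalf ^ 2) • (Y * (B * A)) + (1 - (tHalf ^ 2) ^ 2) • B := by
    rw [mul_assoc, h1, mul_add, mul_smul_comm, mul_smul_comm, mul_one, ← mul_assoc, h2,
      smul_mul_assoc, mul_assoc, smul_smul]
    match_scalars <;> (field_simp [hs]; try ring)
  have e2 : A * B * Y = (tHalf ^ 2) • (Y * (A * B)) + ((tHalf ^ 2)⁻¹ - tHalf ^ 2) • B := by
    rw [mul_assoc, h2, mul_smul_comm, ← mul_assoc, h1, add_mul, smul_mul_assoc,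
      smul_mul_assoc, one_mul, mul_assoc, smul_add, smul_smul, smul_smul]
    match_scalars <;> (field_simp [hs]; try ring)
  have hsum : tHalf • (Y * (tHalf • (B * A) - tHalf⁻¹ • (A * B))) -
      tHalf⁻¹ • ((tHalf • (B * A) - tHalf⁻¹ • (A * B)) * Y) =
      ((tHalf ^ 2 - (tHalf ^ 2)⁻¹) ^ 2) • B := by
    simp only [smul_sub, mul_sub, sub_mul, mul_smul_comm, smul_mul_assoc, smul_smul,
      e1, e2, smul_add]
    match_scalars <;> (field_simp [hs]; try ring)
  have step : (tHalf ^ 2 - (tHalf ^ 2)⁻¹)⁻¹ •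
        (tHalf • (Y * ((tHalf ^ 2 - (tHalf ^ 2)⁻¹)⁻¹ •
            (tHalf • (B * A) - tHalf⁻¹ • (A * B)))) -
          tHalf⁻¹ • (((tHalf ^ 2 - (tHalf ^ 2)⁻¹)⁻¹ •
            (tHalf • (B * A) - tHalf⁻¹ • (A * B))) * Y)) =
      ((tHalf ^ 2 - (tHalf ^ 2)⁻¹)⁻¹ * (tHalf ^ 2 - (tHalf ^ 2)⁻¹)⁻¹) •
        (tHalf • (Y * (tHalf • (B * A) - tHalf⁻¹ • (A * B))) -
          tHalf⁻¹ • ((tHalf • (B * A) - tHalf⁻¹ • (A * B)) * Y)) := by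
    simp only [mul_smul_comm, smul_mul_assoc, smul_sub, smul_smul, mul_sub, sub_mul]
    match_scalars <;> ring
  rw [step, hsum, smul_smul,
    show ((tHalf ^ 2 - (tHalf ^ 2)⁻¹)⁻¹ * (tHalf ^ 2 - (tHalf ^ 2)⁻¹)⁻¹) *
        ((tHalf ^ 2 - (tHalf ^ 2)⁻¹) ^ 2) =
      ((tHalf ^ 2 - (tHalf ^ 2)⁻¹)⁻¹ * (tHalf ^ 2 - (tHalf ^ 2)⁻¹)) ^ 2 by ring,
    inv_mul_cancel₀ hqne, one_pow, one_smul]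

lemma key2 (A B Y : R)
    (h1 : Y * A = ((tHalf ^ 2) ^ 2) • (A * Y) + (1 - (tHalf ^ 2) ^ 2) • (1 : R))
    (h2 : Y * B = (tHalf ^ 2)⁻¹ • (B * Y)) :
    (tHalf ^ 2 - (tHalf ^ 2)⁻¹)⁻¹ •
        (tHalf • (((tHalf ^ 2 - (tHalf ^ 2)⁻¹)⁻¹ •
            (tHalf • (A * B) - tHalf⁻¹ • (B * A))) * Y) -
          tHalf⁻¹ • (Y * ((tHalf ^ 2 - (tHalf ^ 2)⁻¹)⁻¹ •
            (tHalf • (A * B) - tHalf⁻¹ • (B * A))))) = B := by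
  have hqne : tHalf ^ 2 - (tHalf ^ 2)⁻¹ ≠ 0 := by
    have hv : tHalf ^ 2 - (tHalf ^ 2)⁻¹ = (tHalf ^ 4 - 1) / tHalf ^ 2 := by
      field_simp
    rw [hv]
    exact div_ne_zero h4 (pow_ne_zero 2 hs)
  have e1 : Y * (A * B) = (tHalf ^ 2) • (A * B * Y) + (1 - (tHalf ^ 2) ^ 2) • B := by
    rw [← mul_assoc, h1, add_mul, smul_mul_assoc, smul_mul_assoc, one_mul, mul_assoc, h2,
      mul_smul_comm, smul_smul, ← mul_assoc]
    match_scalars <;> (field_simp [hs]; try ring)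
  have e2 : Y * (B * A) = (tHalf ^ 2) • (B * A * Y) + ((tHalf ^ 2)⁻¹ - tHalf ^ 2) • B := by
    rw [← mul_assoc, h2, smul_mul_assoc, mul_assoc, h1, mul_add, mul_smul_comm,
      mul_smul_comm, mul_one, smul_add, smul_smul, smul_smul, ← mul_assoc]
    match_scalars <;> (field_simp [hs]; try ring)
  have hsum : tHalf • ((tHalf • (A * B) - tHalf⁻¹ • (B * A)) * Y) -
      tHalf⁻¹ • (Y * (tHalf • (A * B) - tHalf⁻¹ • (B * A))) =
      ((tHalf ^ 2 - (tHalf ^ 2)⁻¹) ^ 2) • B := by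
    simp only [smul_sub, mul_sub, sub_mul, mul_smul_comm, smul_mul_assoc, smul_smul,
      e1, e2, smul_add]
    match_scalars <;> (field_simp [hs]; try ring)
  have step : (tHalf ^ 2 - (tHalf ^ 2)⁻¹)⁻¹ •
        (tHalf • (((tHalf ^ 2 - (tHalf ^ 2)⁻¹)⁻¹ •
            (tHalf • (A * B) - tHalf⁻¹ • (B * A))) * Y) -
          tHalf⁻¹ • (Y * ((tHalf ^ 2 - (tHalf ^ 2)⁻¹)⁻¹ •
            (tHalf • (A * B) - tHalf⁻¹ • (B * A))))) =
      ((tHalf ^ 2 - (tHalf ^ 2)⁻¹)⁻¹ * (tHalf ^ 2 - (tHalf ^ 2)⁻¹)⁻¹) •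
        (tHalf • ((tHalf • (A * B) - tHalf⁻¹ • (B * A)) * Y) -
          tHalf⁻¹ • (Y * (tHalf • (A * B) - tHalf⁻¹ • (B * A)))) := by
    simp only [mul_smul_comm, smul_mul_assoc, smul_sub, smul_smul, mul_sub, sub_mul]
    match_scalars <;> ring
  rw [step, hsum, smul_smul,
    show ((tHalf ^ 2 - (tHalf ^ 2)⁻¹)⁻¹ * (tHalf ^ 2 - (tHalf ^ 2)⁻¹)⁻¹) *
        ((tHalf ^ 2 - (tHalf ^ 2)⁻¹) ^ 2) =
      ((tHalf ^ 2 - (tHalf ^ 2)⁻¹)⁻¹ * (tHalf ^ 2 - (tHalf ^ 2)⁻¹)) ^ 2 by ring,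
    inv_mul_cancel₀ hqne, one_pow, one_smul]

end Key

set_option linter.unusedSectionVars false in
lemma yboson (a : I → I → ℤ) (i j : I) (m : ℤ) :
    y a i m * y a j (m + 1) =
      (tq ^ (a i j)) • (y a j (m + 1) * y a i m)
        + (if i = j then ((1 : F) - tq ^ 2) • (1 : Kt a) else 0) := by
  have h := RingQuot.mkAlgHom_rel F (KtRel.boson (a := a) i j m)
  simp only [map_mul, map_add, map_smul, apply_ite (RingQuot.mkAlgHom F (KtRel a)),
    map_one, map_zero, y] at h ⊢
  exact h

lemma ztq : (tq : F) ^ (2 : ℤ) = (tHalf ^ 2) ^ 2 := by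
  rw [tq_eq]
  rfl

/-- `T_i` and `T_i'` are mutually inverse; in particular `T_i` is an
`F`-algebra automorphism of `K_t(A)`. -/
theorem statement2 {I : Type} [Fintype I] [DecidableEq I] (a : I → I → ℤ)
    (hA : IsCartanADE a) (i : I) (T T' : Kt a →ₐ[F] Kt a)
    (hT : TiFormula a i ⇑T) (hT' : TiInvFormula a i ⇑T') :
    T.comp T' = AlgHom.id F (Kt a) ∧ T'.comp T = AlgHom.id F (Kt a) ∧
      Function.Bijective ⇑T := by
  obtain ⟨hdiag, hsymm, hoff, -⟩ := hA
  have h2i : ∀ k : I, ¬ (a k k = -1) := fun k h => by rw [hdiag k] at h; norm_num at h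
  have hTT' : T.comp T' = AlgHom.id F (Kt a) := by
    apply RingQuot.ringQuot_ext'
    apply FreeAlgebra.hom_ext
    funext p
    obtain ⟨j, m⟩ := p
    simp only [Function.comp_apply, AlgHom.coe_comp, AlgHom.coe_id, id_eq]
    show T (T' (y a j m)) = y a j m
    rw [hT' j m]
    by_cases hij : a i j = -1
    · have hne : i ≠ j := fun h => h2i j (h ▸ hij)
      rw [if_pos hij, map_smul, map_sub, map_smul, map_smul, map_mul, map_mul,
        hT i m, hT j m, if_neg (h2i i), if_pos rfl, if_pos hij]
      have hb1 := yboson a i i m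
      rw [hdiag i, if_pos rfl, ztq] at hb1
      have hb2 := yboson a j i m
      rw [hsymm j i, hij, if_neg (Ne.symm hne), add_zero, zpow_neg_one] at hb2
      have key := key1 tHalf tHalf_ne_zero tfour_ne_zero
        (y a i m) (y a j m) (y a i (m + 1))
        (by rw [hb1, tq_eq])
        (by rw [hb2, tq_eq])
      simpa only [z, tq_eq] using key
    · rw [if_neg hij, hT j (m - if i = j then 1 else 0), if_neg hij]
      rw [sub_add_cancel]
  have hT'T : T'.comp T = AlgHom.id F (Kt a) := by
    apply RingQuot.ringQuot_ext'
    apply FreeAlgebra.hom_ext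
    funext p
    obtain ⟨j, m⟩ := p
    simp only [Function.comp_apply, AlgHom.coe_comp, AlgHom.coe_id, id_eq]
    show T' (T (y a j m)) = y a j m
    rw [hT j m]
    by_cases hij : a i j = -1
    · have hne : i ≠ j := fun h => h2i j (h ▸ hij)
      rw [if_pos hij]
      rw [z, map_smul, map_sub, map_smul, map_smul, map_mul, map_mul,
        hT' i m, hT' j m, if_neg (h2i i), if_pos rfl, if_pos hij]
      have hm : m - 1 + 1 = m := by ring
      have hb1 := yboson a i i (m - 1)
      rw [hdiag i, if_pos rfl, ztq, hm] at hb1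
      have hb2 := yboson a i j (m - 1)
      rw [hij, if_neg hne, add_zero, zpow_neg_one, hm] at hb2
      have key := key2 tHalf tHalf_ne_zero tfour_ne_zero
        (y a i m) (y a j m) (y a i (m - 1))
        (by rw [hb1, tq_eq])
        (by rw [hb2, tq_eq])
      simpa only [tq_eq] using key
    · rw [if_neg hij, hT' j (m + if i = j then 1 else 0), if_neg hij]
      rw [add_sub_cancel_right]
  exact ⟨hTT', hT'T,
    Function.LeftInverse.injective (g := ⇑T') (fun x => AlgHom.congr_fun hT'T x),
    Function.RightInverse.surjective (fun x => AlgHom.congr_fun hTT' x)⟩
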